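/- Let H be a subfield of ℂ, let A ∈ H^{n×n} be nonderogatory, and let p(λ) ∈ H[λ]. If there exists X ∈ H^{n×n} with p(X) = A, then for every eigenvalue λ_0 ∈ ℂ of A there exists μ ∈ H(λ_0) with p(μ) = λ_0. -/
import Mathlib


open Polynomial Matrix

noncomputable section

lemma my_eval_charpoly {n : ℕ} {R : Type*} [CommRing R] (A : Matrix (Fin n) (Fin n) R) (x : R) :
    A.charpoly.eval x = (x • (1 : Matrix (Fin n) (Fin n) R) - A).det := by
  have h : (evalRingHom x) A.charpoly = ((charmatrix A).map (evalRingHom x)).det := by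
    rw [Matrix.charpoly]
    exact (RingHom.map_det (evalRingHom x) (charmatrix A)).trans rfl
  have h2 : (charmatrix A).map (evalRingHom x) = x • (1 : Matrix (Fin n) (Fin n) R) - A := by
    ext i j
    by_cases hij : i = j <;>
      simp [charmatrix_apply, Matrix.map_apply, Matrix.diagonal, Matrix.one_apply, hij,
        Matrix.sub_apply, Matrix.smul_apply]
  rw [← h2]
  simpa using h

lemma mkQ_aeval {V : Type*} [AddCommGroup V] [Module ℂ V] (W : Submodule ℂ V)
    (f : V →ₗ[ℂ] V) (h : W ≤ W.comap f) (q : ℂ[X]) (v : V) :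
    W.mkQ ((Polynomial.aeval f q) v) = (Polynomial.aeval (W.mapQ W f h) q) (W.mkQ v) := by
  induction q using Polynomial.induction_on generalizing v with
  | C a => simp [Algebra.algebraMap_eq_smul_one]
  | add p q hp hq =>
    simp only [map_add, LinearMap.add_apply]
    rw [hp, hq]
  | monomial k a ih =>
    have e1 : (C a * X ^ (k + 1) : ℂ[X]) = (C a * X ^ k) * X := by ring
    have L : ((aeval f) (C a * X ^ k * X)) v = ((aeval f) (C a * X ^ k)) (f v) := by
      rw [_root_.map_mul]; simp only [Module.End.mul_apply, aeval_X]
    have R : ((aeval (W.mapQ W f h)) (C a * X ^ k * X)) (W.mkQ v)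
        = ((aeval (W.mapQ W f h)) (C a * X ^ k)) ((W.mapQ W f h) (W.mkQ v)) := by
      rw [_root_.map_mul]; simp only [Module.End.mul_apply, aeval_X]
    rw [e1, L, R, ih (f v)]
    congr 1

lemma ker_finrank_le_one {n : ℕ} (A : Matrix (Fin n) (Fin n) ℂ)
    (hmin : minpoly ℂ A = A.charpoly) (lam : ℂ) :
    Module.finrank ℂ ↥(LinearMap.ker (lam • (1 : Matrix (Fin n) (Fin n) ℂ) - A).mulVecLin) ≤ 1 := by
  by_contra hc
  push_neg at hc
  set Bm := lam • (1 : Matrix (Fin n) (Fin n) ℂ) - A with hBm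
  set Kr := LinearMap.ker Bm.mulVecLin with hKr
  have hc2 : 2 ≤ Module.finrank ℂ ↥Kr := hc
  obtain ⟨u, hu⟩ := exists_linearIndependent_of_le_finrank (R := ℂ) (M := ↥Kr) hc2
  have hu' : LinearIndependent ℂ (fun i => (u i : Fin n → ℂ)) :=
    hu.map' Kr.subtype (Submodule.ker_subtype Kr)
  set W := Submodule.span ℂ (Set.range fun i => (u i : Fin n → ℂ)) with hW
  have hWK : W ≤ Kr := Submodule.span_le.mpr (by rintro _ ⟨i, rfl⟩; exact (u i).2)
  have hWrank : Module.finrank ℂ ↥W = 2 := by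
    rw [finrank_span_eq_card hu']; simp
  have hKr_mem : ∀ x ∈ Kr, A.mulVec x = lam • x := by
    intro x hx
    have h0 : Bm.mulVec x = 0 := hx
    rw [hBm, Matrix.sub_mulVec, Matrix.smul_mulVec, Matrix.one_mulVec,
      sub_eq_zero] at h0
    exact h0.symm
  set f := (Matrix.toLinAlgEquiv' A : (Fin n → ℂ) →ₗ[ℂ] (Fin n → ℂ)) with hf
  have hfapp : ∀ x, f x = A.mulVec x := fun x => rfl
  have hcomap : W ≤ W.comap f := by
    intro x hx
    have hxK : x ∈ Kr := hWK hx
    have : f x = lam • x := by rw [hfapp, hKr_mem x hxK]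
    simp only [Submodule.mem_comap, this]
    exact W.smul_mem _ hx
  set fb := W.mapQ W f hcomap with hfb
  set g : ℂ[X] := (X - C lam) * fb.charpoly with hg
  have hgf : Polynomial.aeval f g = 0 := by
    apply LinearMap.ext
    intro v
    have h1 : W.mkQ ((aeval f fb.charpoly) v) = 0 := by
      rw [mkQ_aeval W f hcomap, ← hfb, fb.aeval_self_charpoly]
      rfl
    have h2 : (aeval f fb.charpoly) v ∈ Kr :=
      hWK ((Submodule.Quotient.mk_eq_zero W).mp h1)
    rw [hg, _root_.map_mul]
    simp only [Module.End.mul_apply, map_sub, aeval_X, aeval_C, LinearMap.sub_apply,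
      LinearMap.zero_apply]
    have h3 : f ((aeval f fb.charpoly) v) = lam • ((aeval f fb.charpoly) v) := by
      rw [hfapp, hKr_mem _ h2]
    rw [h3, Algebra.algebraMap_eq_smul_one]
    simp
  have hgA : Polynomial.aeval A g = 0 := by
    have h4 := Polynomial.aeval_algHom_apply
      (Matrix.toLinAlgEquiv' : Matrix (Fin n) (Fin n) ℂ ≃ₐ[ℂ] _).toAlgHom A g
    rw [AlgEquiv.toAlgHom_eq_coe] at h4
    have h5 : (Matrix.toLinAlgEquiv' (Polynomial.aeval A g) :
        (Fin n → ℂ) →ₗ[ℂ] (Fin n → ℂ)) = 0 := h4.symm.trans hgf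
    exact (map_eq_zero_iff _ (AlgEquiv.injective _)).mp h5
  have hdvd : A.charpoly ∣ g := hmin ▸ minpoly.dvd ℂ A hgA
  have hmono : g.Monic := (monic_X_sub_C lam).mul fb.charpoly_monic
  have hnd : Module.finrank ℂ ((Fin n → ℂ) ⧸ W) + 2 = n := by
    have := Submodule.finrank_quotient_add_finrank W
    rw [hWrank] at this
    simpa using this
  have hgdeg : g.natDegree = Module.finrank ℂ ((Fin n → ℂ) ⧸ W) + 1 := by
    rw [hg, (monic_X_sub_C lam).natDegree_mul fb.charpoly_monic, natDegree_X_sub_C,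
      fb.charpoly_natDegree]
    omega
  have hle := Polynomial.natDegree_le_of_dvd hdvd hmono.ne_zero
  rw [hgdeg] at hle
  have hcd : A.charpoly.natDegree = n := by
    rw [Matrix.charpoly_natDegree_eq_dim, Fintype.card_fin]
  omega

lemma aeval_mulVec {n : ℕ} (M : Matrix (Fin n) (Fin n) ℂ) (w : Fin n → ℂ) (c : ℂ)
    (hMw : M *ᵥ w = c • w) (q : ℂ[X]) :
    (Polynomial.aeval M q) *ᵥ w = q.eval c • w := by
  induction q using Polynomial.induction_on with
  | C a => simp [Algebra.algebraMap_eq_smul_one, Matrix.smul_mulVec, Matrix.one_mulVec]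
  | add p q hp hq => simp [Matrix.add_mulVec, hp, hq, add_smul]
  | monomial k a ih =>
    have e1 : (C a * X ^ (k + 1) : ℂ[X]) = (C a * X ^ k) * X := by ring
    rw [e1, _root_.map_mul, aeval_X, ← Matrix.mulVec_mulVec, hMw, Matrix.mulVec_smul, ih,
      smul_smul]
    simp only [eval_mul, eval_C, eval_pow, eval_X, pow_succ]
    ring_nf

/-- Necessity, Drazin. Let `H` be a subfield of `ℂ`, let
`A ∈ H^{n×n}` be nonderogatory and `p ∈ H[λ]`. If `p(X) = A` for some `X ∈ H^{n×n}`,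
then for every eigenvalue `λ₀` of `A` there is `μ ∈ H(λ₀)` with `p(μ) = λ₀`. -/
theorem stmt_10 (H : Subfield ℂ) (n : ℕ) (A : Matrix (Fin n) (Fin n) ℂ)
    (hAH : ∀ i j, A i j ∈ H)
    (hnonderog : minpoly ℂ A = A.charpoly)
    (p : Polynomial ↥H)
    (X : Matrix (Fin n) (Fin n) ℂ) (hXH : ∀ i j, X i j ∈ H)
    (hpX : Polynomial.aeval X (p.map H.subtype) = A) :
    ∀ lam : ℂ, A.charpoly.IsRoot lam →
      ∃ μ ∈ Subfield.closure (insert lam (H : Set ℂ)),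
        (p.map H.subtype).eval μ = lam := by
  intro lam hroot
  set pm : ℂ[X] := p.map H.subtype with hpm
  set K := Subfield.closure (insert lam (H : Set ℂ)) with hKdef
  have hHK : ∀ x : ℂ, x ∈ H → x ∈ K := fun x hx =>
    Subfield.subset_closure (Set.mem_insert_of_mem _ hx)
  have hlamK : lam ∈ K := Subfield.subset_closure (Set.mem_insert _ _)
  set Bm : Matrix (Fin n) (Fin n) ℂ := lam • 1 - A with hBm
  have hBmK : ∀ i j, Bm i j ∈ K := by
    intro i j
    rw [hBm]
    have hs : (lam • (1 : Matrix (Fin n) (Fin n) ℂ) - A) i j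
        = lam * (1 : Matrix (Fin n) (Fin n) ℂ) i j - A i j := by
      simp [Matrix.sub_apply, Matrix.smul_apply]
    rw [hs]
    refine K.sub_mem (K.mul_mem hlamK ?_) (hHK _ (hAH i j))
    by_cases hij : i = j <;> simp [Matrix.one_apply, hij, K.one_mem, K.zero_mem]
  set B' : Matrix (Fin n) (Fin n) K :=
    Matrix.of (fun i j => (⟨Bm i j, hBmK i j⟩ : K)) with hB'
  have hmapB : B'.map (K.subtype) = Bm := by
    ext i j
    rfl
  have hdetBm : Bm.det = 0 := by
    have h := hroot
    rw [Polynomial.IsRoot, my_eval_charpoly] at h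
    exact h
  have hdetB' : B'.det = 0 := by
    have h1 : K.subtype B'.det = (B'.map K.subtype).det := RingHom.map_det _ _
    rw [hmapB, hdetBm] at h1
    exact Subtype.ext h1
  obtain ⟨v, hv0, hv⟩ := Matrix.exists_mulVec_eq_zero_iff.mpr hdetB'
  set w : Fin n → ℂ := fun i => (v i : ℂ) with hwdef
  have hw0 : w ≠ 0 := by
    intro h
    apply hv0
    funext i
    exact Subtype.ext (congrFun h i)
  have hBw : Bm *ᵥ w = 0 := by
    funext i
    have h3 : K.subtype ((B' *ᵥ v) i) = (B'.map K.subtype *ᵥ (K.subtype ∘ v)) i :=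
      RingHom.map_mulVec _ _ _ _
    rw [hv, hmapB] at h3
    have h4 : (K.subtype ∘ v) = w := rfl
    rw [h4] at h3
    simpa using h3.symm
  have hAw : A *ᵥ w = lam • w := by
    have h0 := hBw
    rw [hBm, Matrix.sub_mulVec, Matrix.smul_mulVec, Matrix.one_mulVec, sub_eq_zero] at h0
    exact h0.symm
  have hwker : w ∈ LinearMap.ker Bm.mulVecLin := by
    rw [LinearMap.mem_ker, Matrix.mulVecLin_apply, hBw]
  have hcomm : X * A = A * X := by
    rw [← hpX]
    have h1 : X * Polynomial.aeval X pm = Polynomial.aeval X (Polynomial.X * pm) := by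
      rw [_root_.map_mul, Polynomial.aeval_X]
    have h2 : Polynomial.aeval X pm * X = Polynomial.aeval X (pm * Polynomial.X) := by
      rw [_root_.map_mul, Polynomial.aeval_X]
    rw [h1, h2, mul_comm (Polynomial.X) pm]
  have hBmX : Bm * X = X * Bm := by
    rw [hBm, sub_mul, mul_sub, hcomm, Matrix.smul_mul, Matrix.mul_smul, one_mul, mul_one]
  have hXwker : X *ᵥ w ∈ LinearMap.ker Bm.mulVecLin := by
    rw [LinearMap.mem_ker, Matrix.mulVecLin_apply, Matrix.mulVec_mulVec, hBmX,
      ← Matrix.mulVec_mulVec, hBw, Matrix.mulVec_zero]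
  have hnt : Nontrivial ↥(LinearMap.ker Bm.mulVecLin) := by
    refine ⟨⟨w, hwker⟩, 0, ?_⟩
    intro h
    exact hw0 (by simpa [Subtype.ext_iff] using h)
  have hfr1 : Module.finrank ℂ ↥(LinearMap.ker Bm.mulVecLin) = 1 := by
    have hle := ker_finrank_le_one A hnonderog lam
    rw [← hBm] at hle
    have hpos : 0 < Module.finrank ℂ ↥(LinearMap.ker Bm.mulVecLin) :=
      Module.finrank_pos_iff.mpr hnt
    omega
  have hx0 : (⟨w, hwker⟩ : ↥(LinearMap.ker Bm.mulVecLin)) ≠ 0 := by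
    intro h
    exact hw0 (by simpa [Subtype.ext_iff] using h)
  obtain ⟨c, hc⟩ := exists_smul_eq_of_finrank_eq_one hfr1 hx0
    (⟨X *ᵥ w, hXwker⟩ : ↥(LinearMap.ker Bm.mulVecLin))
  have hXw : X *ᵥ w = c • w := by
    have h := Subtype.ext_iff.mp hc
    simpa using h.symm
  obtain ⟨i, hvi⟩ := Function.ne_iff.mp hv0
  have hvi0 : (v i : K) ≠ 0 := hvi
  have hwi : w i ≠ 0 := fun h => hvi (Subtype.ext h)
  have hXwi_mem : (X *ᵥ w) i ∈ K := by
    have : (X *ᵥ w) i = ∑ j, X i j * w j := rfl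
    rw [this]
    exact Subfield.sum_mem K fun j _ => Subfield.mul_mem K (hHK _ (hXH i j)) (v j).2
  have hcK : c ∈ K := by
    have h1 : (X *ᵥ w) i = c * w i := by rw [hXw]; rfl
    have h2 : c = (X *ᵥ w) i * (w i)⁻¹ := by
      rw [h1, mul_assoc, mul_inv_cancel₀ hwi, mul_one]
    rw [h2]
    exact Subfield.mul_mem K hXwi_mem (Subfield.inv_mem K (v i).2)
  refine ⟨c, hcK, ?_⟩
  have h5 := aeval_mulVec X w c hXw pm
  rw [hpX, hAw] at h5
  have h6 := congrFun h5 i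
  simp only [Pi.smul_apply, smul_eq_mul] at h6
  exact (mul_right_cancel₀ hwi h6).symm
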